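/- The ring R = ℤ + Xℚ[X], i.e., the subring of the polynomial ring ℚ[X] consisting of all polynomials whose constant coefficient is an integer, is a Bézout domain but is not a principal ideal domain. -/

import Mathlib

open Polynomial

/-- The subring `ℤ + Xℚ[X]` of `ℚ[X]`: polynomials with integer constant term. -/
noncomputable def ZplusXQX : Subring (Polynomial ℚ) where
  carrier := {p : Polynomial ℚ | ∃ n : ℤ, p.coeff 0 = (n : ℚ)}
  zero_mem' := ⟨0, by simp⟩
  one_mem' := ⟨1, by simp⟩
  add_mem' := fun {p q} hp hq => by
    obtain ⟨m, hm⟩ := hp; obtain ⟨n, hn⟩ := hq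
    exact ⟨m + n, by simp [hm, hn]⟩
  mul_mem' := fun {p q} hp hq => by
    obtain ⟨m, hm⟩ := hp; obtain ⟨n, hn⟩ := hq
    exact ⟨m * n, by simp [Polynomial.mul_coeff_zero, hm, hn]⟩
  neg_mem' := fun {p} hp => by
    obtain ⟨n, hn⟩ := hp
    exact ⟨-n, by simp [hn]⟩

/-- Adjusting a Bézout relation so the constant terms hit prescribed integer values. -/
lemma ZplusXQX.tau_lemma (p q u0 v0 c s t : ℚ) (h1 : p*u0 + q*v0 = 1)
    (h2 : p*s + q*t = c) : ∃ τ : ℚ, c*u0 + τ*q = s ∧ c*v0 - τ*p = t := by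
  by_cases hq : q = 0
  · have hp : p ≠ 0 := by
      intro hp; rw [hp, hq] at h1; simp at h1
    refine ⟨(c*v0 - t)/p, ?_, by field_simp; ring⟩
    rw [hq, mul_zero, add_zero]
    have h1' : p*u0 = 1 := by rw [hq] at h1; linarith
    have h2' : p*s = c := by rw [hq] at h2; linarith
    calc c*u0 = (p*s)*u0 := by rw [h2']
    _ = s*(p*u0) := by ring
    _ = s := by rw [h1']; ring
  · refine ⟨(s - c*u0)/q, by rw [div_mul_cancel₀ _ hq]; ring, ?_⟩
    field_simp
    linear_combination c*h1 - h2

lemma ZplusXQX.rat_bezout_aux (a b : ℤ) (N p q : ℚ) (hN : N ≠ 0) (hab : ¬(a = 0 ∧ b = 0))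
    (ha : p * N = a) (hb : q * N = b) :
    ∃ (c : ℚ) (s t α β : ℤ), c ≠ 0 ∧ p*s + q*t = c ∧ p = c*α ∧ q = c*β ∧
      c*N = (Int.gcd a b : ℚ) := by
  have hg : Int.gcd a b ≠ 0 := fun h0 => hab (Int.gcd_eq_zero_iff.mp h0)
  have hgQ : ((Int.gcd a b : ℚ)) = (a:ℚ) * (Int.gcdA a b :ℚ) + (b:ℚ) * (Int.gcdB a b : ℚ) := by
    exact_mod_cast Int.gcd_eq_gcd_ab a b
  obtain ⟨α, hα⟩ := Int.gcd_dvd_left (a := a) (b := b)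
  obtain ⟨β, hβ⟩ := Int.gcd_dvd_right (a := a) (b := b)
  have hαQ : (a:ℚ) = (Int.gcd a b : ℚ) * α := by exact_mod_cast hα
  have hβQ : (b:ℚ) = (Int.gcd a b : ℚ) * β := by exact_mod_cast hβ
  have hgQ0 : ((Int.gcd a b : ℚ)) ≠ 0 := by exact_mod_cast hg
  refine ⟨(Int.gcd a b : ℚ)/N, Int.gcdA a b, Int.gcdB a b, α, β,
    div_ne_zero hgQ0 hN, ?_, ?_, ?_, by field_simp⟩
  · field_simp
    linear_combination (Int.gcdA a b : ℚ) * ha + (Int.gcdB a b : ℚ) * hb - hgQ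
  · field_simp
    linear_combination ha + hαQ
  · field_simp
    linear_combination hb + hβQ

/-- The rational-arithmetic core of the Bézout property of `ℤ + Xℚ[X]`. -/
lemma ZplusXQX.rat_bezout (p q u0 v0 d0 : ℚ) (m n : ℤ)
    (h1 : p*u0 + q*v0 = 1) (hm : d0*p = (m:ℚ)) (hn : d0*q = (n:ℚ)) :
    ∃ (c : ℚ) (s t α β e : ℤ), c ≠ 0 ∧ p*s + q*t = c ∧ p = c*α ∧ q = c*β ∧ c*d0 = (e:ℚ) := by
  have hpq : ¬(p = 0 ∧ q = 0) := by
    rintro ⟨hp, hq⟩; rw [hp, hq] at h1; simp at h1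
  by_cases hd0 : d0 = 0
  · -- write p = a/N, q = b/N over a common denominator N
    have hdp : (p.den : ℚ) ≠ 0 := Nat.cast_ne_zero.mpr p.den_nz
    have hdq : (q.den : ℚ) ≠ 0 := Nat.cast_ne_zero.mpr q.den_nz
    have hpmul : p * (p.den : ℚ) = (p.num : ℚ) := Rat.mul_den_eq_num p
    have hqmul : q * (q.den : ℚ) = (q.num : ℚ) := Rat.mul_den_eq_num q
    have ha : p * ((p.den : ℚ) * (q.den : ℚ)) = ((p.num * q.den : ℤ) : ℚ) := by
      push_cast
      linear_combination (q.den : ℚ) * hpmul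
    have hb : q * ((p.den : ℚ) * (q.den : ℚ)) = ((q.num * p.den : ℤ) : ℚ) := by
      push_cast
      linear_combination (p.den : ℚ) * hqmul
    have hab : ¬(p.num * (q.den:ℤ) = 0 ∧ q.num * (p.den:ℤ) = 0) := by
      rintro ⟨h1', h2'⟩
      apply hpq
      constructor
      · have := mul_eq_zero.mp h1'
        rcases this with h | h
        · exact Rat.num_eq_zero.mp h
        · exact absurd h (by exact_mod_cast q.den_nz)
      · have := mul_eq_zero.mp h2'
        rcases this with h | h
        · exact Rat.num_eq_zero.mp h
        · exact absurd h (by exact_mod_cast p.den_nz)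
    obtain ⟨c, s, t, α, β, hc0, hst, hpα, hqβ, _⟩ :=
      ZplusXQX.rat_bezout_aux (p.num * q.den) (q.num * p.den) ((p.den : ℚ) * (q.den : ℚ)) p q
        (mul_ne_zero hdp hdq) hab ha hb
    exact ⟨c, s, t, α, β, 0, hc0, hst, hpα, hqβ, by rw [hd0]; simp⟩
  · -- d0 ≠ 0
    have hmn : ¬(m = 0 ∧ n = 0) := by
      rintro ⟨hm0, hn0⟩
      apply hpq
      rw [hm0] at hm; rw [hn0] at hn
      push_cast at hm hn
      constructor
      · rcases mul_eq_zero.mp hm with h | h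
        · exact absurd h hd0
        · exact h
      · rcases mul_eq_zero.mp hn with h | h
        · exact absurd h hd0
        · exact h
    obtain ⟨c, s, t, α, β, hc0, hst, hpα, hqβ, hcN⟩ :=
      ZplusXQX.rat_bezout_aux m n d0 p q hd0 hmn (by linarith [hm]) (by linarith [hn])
    exact ⟨c, s, t, α, β, Int.gcd m n, hc0, hst, hpα, hqβ, by rw [hcN]; push_cast; ring⟩

theorem ZplusXQX_bezout_not_pid :
    IsDomain ZplusXQX ∧
    (∀ a b : ZplusXQX, (Ideal.span {a, b} : Ideal ZplusXQX).IsPrincipal) ∧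
    ¬IsPrincipalIdealRing ZplusXQX := by
  refine ⟨inferInstance, ?_, ?_⟩
  · -- Bézout
    intro a b
    by_cases ha : a = 0
    · subst ha
      exact ⟨⟨b, by rw [show ({0, b} : Set ZplusXQX) = insert 0 {b} from rfl, Ideal.span,
        Submodule.span_insert_zero]⟩⟩
    by_cases hb : b = 0
    · subst hb
      refine ⟨⟨a, ?_⟩⟩
      rw [Ideal.span_pair_comm]
      rw [show ({0, a} : Set ZplusXQX) = insert 0 {a} from rfl, Ideal.span,
        Submodule.span_insert_zero]
    have hav : (a : ℚ[X]) ≠ 0 := fun h => ha (by exact_mod_cast Subtype.ext h)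
    obtain ⟨d, A, B, u₀, v₀, hd, hA, hB, huv⟩ :
        ∃ d A B u₀ v₀ : ℚ[X], d ≠ 0 ∧ (a:ℚ[X]) = d * A ∧ (b:ℚ[X]) = d * B ∧
          A*u₀ + B*v₀ = 1 := by
      obtain ⟨A, hA⟩ := EuclideanDomain.gcd_dvd_left (a:ℚ[X]) (b:ℚ[X])
      obtain ⟨B, hB⟩ := EuclideanDomain.gcd_dvd_right (a:ℚ[X]) (b:ℚ[X])
      have hd : EuclideanDomain.gcd (a:ℚ[X]) (b:ℚ[X]) ≠ 0 :=
        fun h => hav (EuclideanDomain.gcd_eq_zero_iff.mp h).1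
      refine ⟨_, A, B, EuclideanDomain.gcdA (a:ℚ[X]) (b:ℚ[X]), EuclideanDomain.gcdB (a:ℚ[X]) (b:ℚ[X]), hd, hA, hB, ?_⟩
      apply mul_left_cancel₀ hd
      rw [mul_one]
      calc EuclideanDomain.gcd (a:ℚ[X]) (b:ℚ[X]) *
            (A * EuclideanDomain.gcdA (a:ℚ[X]) (b:ℚ[X]) + B * EuclideanDomain.gcdB (a:ℚ[X]) (b:ℚ[X]))
          = (EuclideanDomain.gcd (a:ℚ[X]) (b:ℚ[X]) * A) * EuclideanDomain.gcdA (a:ℚ[X]) (b:ℚ[X]) +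
            (EuclideanDomain.gcd (a:ℚ[X]) (b:ℚ[X]) * B) * EuclideanDomain.gcdB (a:ℚ[X]) (b:ℚ[X]) := by
            ring
      _ = (a:ℚ[X]) * EuclideanDomain.gcdA (a:ℚ[X]) (b:ℚ[X]) +
            (b:ℚ[X]) * EuclideanDomain.gcdB (a:ℚ[X]) (b:ℚ[X]) := by rw [← hA, ← hB]
      _ = EuclideanDomain.gcd (a:ℚ[X]) (b:ℚ[X]) := (EuclideanDomain.gcd_eq_gcd_ab _ _).symm
    -- constant coefficients
    have h1 : A.coeff 0 * u₀.coeff 0 + B.coeff 0 * v₀.coeff 0 = 1 := by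
      have := congrArg (fun P : ℚ[X] => P.coeff 0) huv
      simpa [Polynomial.mul_coeff_zero] using this
    obtain ⟨m, hm⟩ := a.2
    obtain ⟨n, hn⟩ := b.2
    have hdm : d.coeff 0 * A.coeff 0 = (m:ℚ) := by
      rw [← Polynomial.mul_coeff_zero, ← hA]; exact hm
    have hdn : d.coeff 0 * B.coeff 0 = (n:ℚ) := by
      rw [← Polynomial.mul_coeff_zero, ← hB]; exact hn
    obtain ⟨c, s, t, α, β, e, hc0, hst, hpα, hqβ, hed⟩ :=
      ZplusXQX.rat_bezout (A.coeff 0) (B.coeff 0) (u₀.coeff 0) (v₀.coeff 0) (d.coeff 0) m n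
        h1 hdm hdn
    obtain ⟨τ, hτ1, hτ2⟩ :=
      ZplusXQX.tau_lemma (A.coeff 0) (B.coeff 0) (u₀.coeff 0) (v₀.coeff 0) c s t h1 hst
    have hHmem : C c * d ∈ ZplusXQX := ⟨e, by
      rw [Polynomial.mul_coeff_zero, Polynomial.coeff_C_zero]
      exact hed⟩
    have hUmem : C c * u₀ + C τ * B ∈ ZplusXQX := ⟨s, by
      simp only [Polynomial.coeff_add, Polynomial.mul_coeff_zero, Polynomial.coeff_C_zero]
      exact hτ1⟩
    have hVmem : C c * v₀ - C τ * A ∈ ZplusXQX := ⟨t, by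
      simp only [Polynomial.coeff_sub, Polynomial.mul_coeff_zero, Polynomial.coeff_C_zero]
      exact hτ2⟩
    have hWmem : C c⁻¹ * A ∈ ZplusXQX := ⟨α, by
      simp only [Polynomial.mul_coeff_zero, Polynomial.coeff_C_zero]
      rw [hpα]; field_simp⟩
    have hZmem : C c⁻¹ * B ∈ ZplusXQX := ⟨β, by
      simp only [Polynomial.mul_coeff_zero, Polynomial.coeff_C_zero]
      rw [hqβ]; field_simp⟩
    have hcc : (C c : ℚ[X]) * C c⁻¹ = 1 := by
      rw [← Polynomial.C_mul, mul_inv_cancel₀ hc0, Polynomial.C_1]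
    -- polynomial identities
    have idfu : (a:ℚ[X]) * (C c * u₀ + C τ * B) + (b:ℚ[X]) * (C c * v₀ - C τ * A) = C c * d := by
      linear_combination (C c * u₀ + C τ * B) * hA + (C c * v₀ - C τ * A) * hB +
        (C c * d) * huv
    have idhw : (C c * d) * (C c⁻¹ * A) = (a:ℚ[X]) := by
      linear_combination (d * A) * hcc - hA
    have idhz : (C c * d) * (C c⁻¹ * B) = (b:ℚ[X]) := by
      linear_combination (d * B) * hcc - hB
    -- finish in the subring
    refine ⟨⟨⟨C c * d, hHmem⟩, ?_⟩⟩
    show Ideal.span {a, b} = Ideal.span {(⟨C c * d, hHmem⟩ : ZplusXQX)}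
    apply le_antisymm
    · rw [Ideal.span_le]
      rintro x (rfl | rfl)
      · exact Ideal.mem_span_singleton'.mpr
          ⟨⟨C c⁻¹ * A, hWmem⟩, by apply Subtype.ext; push_cast; rw [mul_comm]; exact idhw⟩
      · exact Ideal.mem_span_singleton'.mpr
          ⟨⟨C c⁻¹ * B, hZmem⟩, by apply Subtype.ext; push_cast; rw [mul_comm]; exact idhz⟩
    · rw [Ideal.span_le, Set.singleton_subset_iff]
      exact Ideal.mem_span_pair.mpr
        ⟨⟨C c * u₀ + C τ * B, hUmem⟩, ⟨C c * v₀ - C τ * A, hVmem⟩, by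
          apply Subtype.ext
          push_cast
          rw [mul_comm _ ((a:ℚ[X])), mul_comm _ ((b:ℚ[X]))]
          exact idfu⟩
  · -- not a PID
    intro hpid
    set I : Ideal ZplusXQX :=
      { carrier := {x : ZplusXQX | (x : ℚ[X]).coeff 0 = 0}
        zero_mem' := by simp
        add_mem' := fun {x y} hx hy => by
          simp only [Set.mem_setOf_eq] at *
          push_cast
          rw [Polynomial.coeff_add, hx, hy, add_zero]
        smul_mem' := fun r x hx => by
          simp only [Set.mem_setOf_eq] at *
          rw [smul_eq_mul]
          push_cast
          rw [Polynomial.mul_coeff_zero, hx, mul_zero] } with hI_def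
    have memI : ∀ x : ZplusXQX, x ∈ I ↔ (x : ℚ[X]).coeff 0 = 0 := fun x => Iff.rfl
    have hXmem : (X : ℚ[X]) ∈ ZplusXQX := ⟨0, by simp⟩
    have hXI : (⟨X, hXmem⟩ : ZplusXQX) ∈ I := by
      rw [memI]
      simp
    obtain ⟨gen, hgen⟩ := hpid.principal I
    have hgI : gen ∈ I := by
      rw [hgen]
      exact Ideal.mem_span_singleton_self gen
    have hg0 : (gen : ℚ[X]).coeff 0 = 0 := (memI gen).mp hgI
    rw [hgen] at hXI
    obtain ⟨r, hr⟩ := Ideal.mem_span_singleton'.mp hXI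
    have hrX : (r : ℚ[X]) * (gen : ℚ[X]) = X := by
      have h := congrArg (fun x : ZplusXQX => (x : ℚ[X])) hr
      simpa using h
    obtain ⟨G', hG'⟩ := Polynomial.X_dvd_iff.mpr hg0
    have hGR : (1 : ℚ[X]) = G' * (r : ℚ[X]) := by
      apply mul_left_cancel₀ (Polynomial.X_ne_zero (R := ℚ))
      rw [mul_one]
      calc (X : ℚ[X]) = (r : ℚ[X]) * (gen : ℚ[X]) := hrX.symm
      _ = X * (G' * (r : ℚ[X])) := by rw [hG']; ring
    have hG'0 : G'.coeff 0 * (r : ℚ[X]).coeff 0 = 1 := by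
      have := congrArg (fun P : ℚ[X] => P.coeff 0) hGR
      simpa [Polynomial.mul_coeff_zero] using this.symm
    have hG'ne : G'.coeff 0 ≠ 0 := by
      intro h; rw [h, zero_mul] at hG'0; exact zero_ne_one hG'0
    -- the witness element (G'₀/2)·X lies in I but not in (gen)
    have hwmem : C (G'.coeff 0 / 2) * X ∈ ZplusXQX := ⟨0, by simp⟩
    have hwI : (⟨C (G'.coeff 0 / 2) * X, hwmem⟩ : ZplusXQX) ∈ I := by
      rw [memI]
      simp
    rw [hgen] at hwI
    obtain ⟨z, hz⟩ := Ideal.mem_span_singleton'.mp hwI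
    have hzw : (z : ℚ[X]) * (gen : ℚ[X]) = C (G'.coeff 0 / 2) * X := by
      have h := congrArg (fun x : ZplusXQX => (x : ℚ[X])) hz
      simpa using h
    obtain ⟨j, hj⟩ := z.2
    -- compare the coefficient of X
    have hc1 : (j : ℚ) * G'.coeff 0 = G'.coeff 0 / 2 := by
      have hcoeff := congrArg (fun P : ℚ[X] => P.coeff 1) hzw
      rw [hG'] at hcoeff
      have lhs : ((z : ℚ[X]) * (X * G')).coeff 1 = (z : ℚ[X]).coeff 0 * G'.coeff 0 := by
        rw [show (z : ℚ[X]) * (X * G') = X * ((z : ℚ[X]) * G') by ring,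
          Polynomial.coeff_X_mul, Polynomial.mul_coeff_zero]
      have rhs : (C (G'.coeff 0 / 2) * X).coeff 1 = G'.coeff 0 / 2 := by
        rw [Polynomial.coeff_C_mul, Polynomial.coeff_X_one, mul_one]
      rw [lhs, rhs, hj] at hcoeff
      exact hcoeff
    have h2j : (2 * j : ℚ) = 1 := by
      have h' : (2*(j:ℚ)) * G'.coeff 0 = 1 * G'.coeff 0 := by linarith [hc1]
      rcases mul_eq_mul_right_iff.mp h' with h | h
      · rw [h]
      · exact absurd h hG'ne
    have h2j' : (2 * j : ℤ) = 1 := by exact_mod_cast h2j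
    omega
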